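/- Let A be a noetherian commutative ring graded by an abelian group ι, and let I be a homogeneous ideal of A. Then I admits a minimal G-primary decomposition: there exist finitely many (possibly zero) G-primary homogeneous ideals Q₁, …, Q_r of A such that I = Q₁ ∩ ⋯ ∩ Q_r, the ideals (√Q₁)*, …, (√Q_r)* are pairwise distinct, and for each i the intersection ⋂_{j ≠ i} Q_j is not contained in Q_i. -/

import Mathlib

/-- A homogeneous ideal `Q` of a graded ring `A` is `G`-primary if `Q ≠ A` and for all
homogeneous ideals `I`, `J` with `I·J ⊆ Q` and `J ⊄ Q`, one has `I ⊆ (√Q)*`. -/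
def Ideal.IsGPrimary {ι : Type*} [AddCommGroup ι] [DecidableEq ι] {A : Type*} [CommRing A]
    (𝒜 : ι → AddSubgroup A) [GradedRing 𝒜] (Q : Ideal A) : Prop :=
  Q ≠ ⊤ ∧ ∀ I J : Ideal A, I.IsHomogeneous 𝒜 → J.IsHomogeneous 𝒜 →
    I * J ≤ Q → ¬ J ≤ Q → I ≤ (Q.radical.homogeneousCore 𝒜).toIdeal

section Aux

variable {ι : Type*} [AddCommGroup ι] [DecidableEq ι] {A : Type*} [CommRing A]
  (𝒜 : ι → AddSubgroup A) [GradedRing 𝒜]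

/-- The homogeneous core of an ideal, as an ideal. -/
def Ideal.hCore (J : Ideal A) : Ideal A := (J.homogeneousCore 𝒜).toIdeal

lemma Ideal.hCore_le (J : Ideal A) : J.hCore 𝒜 ≤ J :=
  Ideal.toIdeal_homogeneousCore_le 𝒜 J

lemma Ideal.hCore_isHomogeneous (J : Ideal A) : (J.hCore 𝒜).IsHomogeneous 𝒜 :=
  (J.homogeneousCore 𝒜).isHomogeneous

lemma Ideal.hCore_mono {J K : Ideal A} (h : J ≤ K) : J.hCore 𝒜 ≤ K.hCore 𝒜 :=
  Ideal.homogeneousCore'_mono 𝒜 h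

lemma Ideal.IsHomogeneous.hCore_eq_self {J : Ideal A} (h : J.IsHomogeneous 𝒜) :
    J.hCore 𝒜 = J :=
  h.toIdeal_homogeneousCore_eq_self

lemma Ideal.le_hCore {L J : Ideal A} (hL : L.IsHomogeneous 𝒜) (h : L ≤ J) :
    L ≤ J.hCore 𝒜 := by
  calc L = L.hCore 𝒜 := (hL.hCore_eq_self 𝒜).symm
  _ ≤ J.hCore 𝒜 := Ideal.hCore_mono 𝒜 h

lemma Ideal.hCore_top : (⊤ : Ideal A).hCore 𝒜 = ⊤ :=
  (Ideal.IsHomogeneous.top 𝒜).hCore_eq_self 𝒜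

lemma Ideal.hCore_inf (J K : Ideal A) :
    (J ⊓ K).hCore 𝒜 = J.hCore 𝒜 ⊓ K.hCore 𝒜 := by
  refine le_antisymm (le_inf (Ideal.hCore_mono 𝒜 inf_le_left)
    (Ideal.hCore_mono 𝒜 inf_le_right)) ?_
  exact Ideal.le_hCore 𝒜 (((J.hCore_isHomogeneous 𝒜)).inf (K.hCore_isHomogeneous 𝒜))
    (inf_le_inf (J.hCore_le 𝒜) (K.hCore_le 𝒜))

lemma Ideal.hCore_finset_inf {α : Type*} (s : Finset α) (f : α → Ideal A) :
    (s.inf f).hCore 𝒜 = s.inf (fun a => (f a).hCore 𝒜) := by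
  classical
  induction s using Finset.cons_induction with
  | empty => simpa using Ideal.hCore_top 𝒜
  | cons a s ha ih => simp [Finset.inf_cons, Ideal.hCore_inf, ih]

lemma Ideal.hCore_radical_le (Q : Ideal A) :
    Q.radical.hCore 𝒜 ≤ (Q.hCore 𝒜).radical := by
  have heq : Q.radical.hCore 𝒜 = Ideal.span
      ((↑) '' (((↑) : Subtype (SetLike.IsHomogeneousElem 𝒜) → A) ⁻¹' Q.radical)) := rfl
  rw [heq]
  refine Ideal.span_le.mpr ?_
  rintro x ⟨⟨y, i, hy⟩, hmem, rfl⟩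
  obtain ⟨n, hn⟩ := hmem
  exact ⟨n, Ideal.mem_homogeneousCore_of_homogeneous_of_mem
    ⟨n • i, SetLike.pow_mem_graded n hy⟩ hn⟩

lemma Ideal.hCore_radical_hCore (Q : Ideal A) :
    (Q.hCore 𝒜).radical.hCore 𝒜 = Q.radical.hCore 𝒜 :=
  le_antisymm (Ideal.hCore_mono 𝒜 (Ideal.radical_mono (Q.hCore_le 𝒜)))
    (Ideal.le_hCore 𝒜 (Ideal.hCore_isHomogeneous 𝒜 _) (Q.hCore_radical_le 𝒜))

lemma Ideal.IsPrimary.isGPrimary_hCore {Q : Ideal A} (hQ : Q.IsPrimary) :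
    (Q.hCore 𝒜).IsGPrimary 𝒜 := by
  obtain ⟨hne, hprim⟩ := Ideal.isPrimary_iff.mp hQ
  constructor
  · intro h
    exact hne (top_le_iff.mp (h ▸ Q.hCore_le 𝒜))
  · intro I J hIh hJh hIJ hJ
    have hJQ : ¬ J ≤ Q := fun h => hJ (Ideal.le_hCore 𝒜 hJh h)
    obtain ⟨j, hjJ, hjQ⟩ := SetLike.not_le_iff_exists.mp hJQ
    have hIr : I ≤ Q.radical := by
      intro x hx
      have : j * x ∈ Q := by
        rw [mul_comm]
        exact (Q.hCore_le 𝒜) (hIJ (Ideal.mul_mem_mul hx hjJ))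
      exact (hprim this).resolve_left hjQ
    have : I ≤ Q.radical.hCore 𝒜 := Ideal.le_hCore 𝒜 hIh hIr
    rwa [← Ideal.hCore_radical_hCore 𝒜] at this

lemma Ideal.IsGPrimary.inf {Q₁ Q₂ : Ideal A}
    (h₁h : Q₁.IsHomogeneous 𝒜) (h₂h : Q₂.IsHomogeneous 𝒜)
    (h₁ : Q₁.IsGPrimary 𝒜) (h₂ : Q₂.IsGPrimary 𝒜)
    (hrad : Q₁.radical.hCore 𝒜 = Q₂.radical.hCore 𝒜) :
    (Q₁ ⊓ Q₂).IsGPrimary 𝒜 ∧ (Q₁ ⊓ Q₂).radical.hCore 𝒜 = Q₁.radical.hCore 𝒜 := by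
  have hradinf : (Q₁ ⊓ Q₂).radical.hCore 𝒜 = Q₁.radical.hCore 𝒜 := by
    rw [Ideal.radical_inf, Ideal.hCore_inf, ← hrad, inf_idem]
  refine ⟨⟨?_, ?_⟩, hradinf⟩
  · intro h
    exact h₁.1 (top_le_iff.mp (h ▸ inf_le_left))
  · intro I J hIh hJh hIJ hJ
    have : ¬ J ≤ Q₁ ∨ ¬ J ≤ Q₂ := by
      by_contra h
      push_neg at h
      exact hJ (le_inf h.1 h.2)
    show I ≤ ((Q₁ ⊓ Q₂).radical.hCore 𝒜)
    rw [hradinf]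
    rcases this with h | h
    · exact h₁.2 I J hIh hJh (hIJ.trans inf_le_left) h
    · rw [hrad]
      exact h₂.2 I J hIh hJh (hIJ.trans inf_le_right) h

lemma Ideal.isGPrimary_finset_inf {s : Finset (Ideal A)} {P : Ideal A} (hne : s.Nonempty)
    (hs : ∀ J ∈ s, J.IsHomogeneous 𝒜 ∧ J.IsGPrimary 𝒜)
    (hrad : ∀ J ∈ s, J.radical.hCore 𝒜 = P) :
    (s.inf id).IsHomogeneous 𝒜 ∧ (s.inf id).IsGPrimary 𝒜 ∧
      (s.inf id).radical.hCore 𝒜 = P := by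
  classical
  induction hne using Finset.Nonempty.cons_induction with
  | singleton a =>
    simp only [Finset.inf_singleton, id]
    exact ⟨(hs a (by simp)).1, (hs a (by simp)).2, hrad a (by simp)⟩
  | cons a s ha hne ih =>
    have hmem : ∀ J ∈ s, J ∈ Finset.cons a s ha := fun J hJ => by simp [hJ]
    obtain ⟨ih1, ih2, ih3⟩ := ih (fun J hJ => hs J (hmem J hJ)) (fun J hJ => hrad J (hmem J hJ))
    rw [Finset.inf_cons]
    have haS := hs a (by simp)
    have hr : a.radical.hCore 𝒜 = (s.inf id).radical.hCore 𝒜 := by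
      rw [ih3, hrad a (by simp)]
    obtain ⟨hgp, hrd⟩ := Ideal.IsGPrimary.inf 𝒜 haS.1 ih1 haS.2 ih2 hr
    refine ⟨haS.1.inf ih1, hgp, ?_⟩
    show hCore 𝒜 (a ⊓ s.inf id).radical = P
    rw [hrd, hrad a (by simp)]

end Aux

open scoped Function

section Main

variable {ι : Type*} [AddCommGroup ι] [DecidableEq ι] {A : Type*} [CommRing A]
  (𝒜 : ι → AddSubgroup A) [GradedRing 𝒜]

lemma Ideal.gPrimary_decomposition_pairwise {I : Ideal A} {s : Finset (Ideal A)}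
    (hs : s.inf id = I) (hs' : ∀ J ∈ s, J.IsHomogeneous 𝒜 ∧ J.IsGPrimary 𝒜) :
    ∃ t : Finset (Ideal A), t.inf id = I ∧ (∀ J ∈ t, J.IsHomogeneous 𝒜 ∧ J.IsGPrimary 𝒜) ∧
      (t : Set (Ideal A)).Pairwise ((· ≠ ·) on fun J => J.radical.hCore 𝒜) := by
  classical
  refine ⟨(s.image (fun J ↦ s.filter (fun K ↦ K.radical.hCore 𝒜 = J.radical.hCore 𝒜))).image
    fun u ↦ u.inf id, ?_, ?_, ?_⟩
  · rw [← hs]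
    refine le_antisymm ?_ ?_ <;> intro x hx
    · simp only [Finset.inf_image, CompTriple.comp_eq, Submodule.mem_finsetInf,
        Function.comp_apply, Finset.mem_filter, id_eq, and_imp] at hx ⊢
      intro J hJ
      exact hx J hJ J hJ rfl
    · simp only [Submodule.mem_finsetInf, id_eq, Finset.inf_image, CompTriple.comp_eq,
        Function.comp_apply, Finset.mem_filter, and_imp] at hx ⊢
      intro J _ K hK _
      exact hx K hK
  · simp only [Finset.mem_image, exists_exists_and_eq_and, forall_exists_index, and_imp,
      forall_apply_eq_imp_iff₂]
    intro J hJ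
    have := Ideal.isGPrimary_finset_inf 𝒜
      (s := s.filter (fun K ↦ K.radical.hCore 𝒜 = J.radical.hCore 𝒜))
      (P := J.radical.hCore 𝒜) ⟨J, by simp [hJ]⟩
      (fun K hK => hs' K (Finset.mem_filter.mp hK).1)
      (fun K hK => (Finset.mem_filter.mp hK).2)
    exact ⟨this.1, this.2.1⟩
  · intro P hP R hR hPR
    simp only [Finset.coe_image, Set.mem_image, Finset.mem_coe, exists_exists_and_eq_and]
      at hP hR
    obtain ⟨P', hP', hP⟩ := hP
    obtain ⟨R', hR', hR⟩ := hR
    simp only [Function.onFun, ne_eq]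
    contrapose! hPR
    have e1 := (Ideal.isGPrimary_finset_inf 𝒜
      (s := s.filter (fun K ↦ K.radical.hCore 𝒜 = P'.radical.hCore 𝒜))
      (P := P'.radical.hCore 𝒜) ⟨P', by simp [hP']⟩
      (fun K hK => hs' K (Finset.mem_filter.mp hK).1)
      (fun K hK => (Finset.mem_filter.mp hK).2)).2.2
    have e2 := (Ideal.isGPrimary_finset_inf 𝒜
      (s := s.filter (fun K ↦ K.radical.hCore 𝒜 = R'.radical.hCore 𝒜))
      (P := R'.radical.hCore 𝒜) ⟨R', by simp [hR']⟩
      (fun K hK => hs' K (Finset.mem_filter.mp hK).1)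
      (fun K hK => (Finset.mem_filter.mp hK).2)).2.2
    rw [← hP, ← hR, e1, e2] at hPR
    rw [← hP, ← hR, hPR]

end Main

/-- Every homogeneous ideal `I` of a noetherian graded ring admits a minimal `G`-primary
decomposition: there are finitely many (possibly zero) `G`-primary homogeneous ideals
`Q 0, …, Q (r-1)` such that `I = ⋂ i, Q i`, the `G`-radicals `(√(Q i))*` are pairwise
distinct, and for each `i` the intersection `⋂_{j ≠ i} Q j` is not contained in `Q i`. -/
theorem Ideal.exists_minimal_gPrimary_decomposition {ι : Type*} [AddCommGroup ι]
    [DecidableEq ι] {A : Type*} [CommRing A] [IsNoetherianRing A]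
    (𝒜 : ι → AddSubgroup A) [GradedRing 𝒜] (I : Ideal A) (hI : I.IsHomogeneous 𝒜) :
    ∃ (r : ℕ) (Q : Fin r → Ideal A),
      (∀ i, (Q i).IsHomogeneous 𝒜 ∧ (Q i).IsGPrimary 𝒜) ∧
      I = ⨅ i, Q i ∧
      (∀ i j, ((Q i).radical.homogeneousCore 𝒜).toIdeal
          = ((Q j).radical.homogeneousCore 𝒜).toIdeal → i = j) ∧
      (∀ i, ¬ (⨅ j, ⨅ (_ : j ≠ i), Q j) ≤ Q i) := by
  classical
  obtain ⟨s, hsinf, hsprim⟩ := Ideal.isLasker A A I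
  -- pass to homogeneous cores
  have hs'inf : (s.image (Ideal.hCore 𝒜)).inf id = I := by
    rw [Finset.inf_image,
      show (id ∘ Ideal.hCore 𝒜) = (fun a : Ideal A => (id a).hCore 𝒜) from rfl,
      ← Ideal.hCore_finset_inf 𝒜 s id, hsinf, hI.hCore_eq_self]
  have hs'prim : ∀ J ∈ s.image (Ideal.hCore 𝒜), J.IsHomogeneous 𝒜 ∧ J.IsGPrimary 𝒜 := by
    intro J hJ
    obtain ⟨Q, hQ, rfl⟩ := Finset.mem_image.mp hJ
    exact ⟨Q.hCore_isHomogeneous 𝒜, Ideal.IsPrimary.isGPrimary_hCore 𝒜 (hsprim hQ)⟩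
  obtain ⟨t, htinf, htprim, htpair⟩ :=
    Ideal.gPrimary_decomposition_pairwise 𝒜 hs'inf hs'prim
  obtain ⟨u, hut, huinf, huerase⟩ := Ideal.decomposition_erase_inf htinf
  have huprim : ∀ J ∈ u, Ideal.IsHomogeneous 𝒜 J ∧ Ideal.IsGPrimary 𝒜 J := fun J hJ => htprim J (hut hJ)
  have hupair : (u : Set (Ideal A)).Pairwise ((· ≠ ·) on fun J => J.radical.hCore 𝒜) :=
    htpair.mono (Finset.coe_subset.mpr hut)
  -- convert to `Fin`
  let e : Fin u.card ≃ {x // x ∈ u} := u.equivFin.symm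
  refine ⟨u.card, fun i => ((e i : {x // x ∈ u}) : Ideal A), ?_, ?_, ?_, ?_⟩
  · intro i
    exact huprim _ (e i).2
  · rw [← huinf, Finset.inf_id_eq_sInf, sInf_eq_iInf']
    exact (Equiv.iInf_comp (g := fun x : {x // x ∈ u} => (x : Ideal A)) e).symm
  · intro i j h
    by_contra hij
    have hne : ((e i : {x // x ∈ u}) : Ideal A) ≠ ((e j : {x // x ∈ u}) : Ideal A) :=
      fun hh => hij (e.injective (Subtype.coe_injective hh))
    exact hupair (e i).2 (e j).2 hne h
  · intro i hle
    refine huerase (J := ((e i : {x // x ∈ u}) : Ideal A)) (e i).2 ?_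
    refine le_trans (le_iInf fun j => le_iInf fun hji => ?_) hle
    have hmem : ((e j : {x // x ∈ u}) : Ideal A) ∈ u.erase ((e i : {x // x ∈ u}) : Ideal A) :=
      Finset.mem_erase.mpr
        ⟨fun hh => hji (e.injective (Subtype.coe_injective hh)), (e j).2⟩
    exact Finset.inf_le hmem
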